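/- Let 1 < α < 2 and set c_α := (Γ(2−α)/(1−α)) · cos(πα/2) > 0. Then ∫_{−∞}^{∞} exp{ −c_α |λ|^α (1 + i · sgn(λ) · tan(πα/2)) } dλ = 2 Γ(1 + 1/α) ((α−1)/Γ(2−α))^{1/α} sin(π/α). -/

import Mathlib

open MeasureTheory

namespace StableCharAux

open Set Filter

lemma norm_aux (z : ℂ) (r : ℝ) : ‖Complex.exp (-z * (r : ℂ))‖ = Real.exp (-z.re * r) := by
  rw [Complex.norm_exp]
  norm_num [Complex.mul_re]

lemma meas_aux (α : ℝ) (z : ℂ) (μ : Measure ℝ) :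
    AEStronglyMeasurable (fun x : ℝ => Complex.exp (-z * ((x ^ α : ℝ) : ℂ))) μ := by
  apply Measurable.aestronglyMeasurable
  fun_prop

lemma integrable_aux (α : ℝ) (hα1 : 1 < α) {z : ℂ} (hz : 0 < z.re) :
    IntegrableOn (fun x : ℝ => Complex.exp (-z * ((x ^ α : ℝ) : ℂ))) (Ioi 0) := by
  have h := integrableOn_rpow_mul_exp_neg_mul_rpow (p := α) (s := 0) (by norm_num) (by linarith) hz
  simp_rw [Real.rpow_zero, one_mul] at h
  refine h.mono' (meas_aux α z _) ?_
  filter_upwards with x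
  rw [norm_aux]

lemma key (α : ℝ) (hα1 : 1 < α) {z : ℂ} (hz : 0 < z.re) :
    ∫ x : ℝ in Ioi 0, Complex.exp (-z * ((x ^ α : ℝ) : ℂ))
      = ((Real.Gamma (1 / α + 1) : ℝ) : ℂ) * z ^ ((-(1 / α) : ℝ) : ℂ) := by
  have hα0 : (0 : ℝ) < α := by linarith
  set U : Set ℂ := {w : ℂ | 0 < w.re} with hUdef
  have hUopen : IsOpen U := isOpen_lt continuous_const Complex.continuous_re
  have hUconn : IsPreconnected U := (convex_halfSpace_re_gt 0).isPreconnected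
  set f : ℂ → ℂ := fun w => ∫ x : ℝ in Ioi 0, Complex.exp (-w * ((x ^ α : ℝ) : ℂ)) with hf
  set g : ℂ → ℂ := fun w => ((Real.Gamma (1 / α + 1) : ℝ) : ℂ) * w ^ ((-(1 / α) : ℝ) : ℂ) with hg
  have hfa : AnalyticOnNhd ℂ f U := by
    refine DifferentiableOn.analyticOnNhd ?_ hUopen
    intro w hw
    have hw' : (0 : ℝ) < w.re := hw
    refine DifferentiableAt.differentiableWithinAt ?_
    set ε := w.re / 2 with hε
    have hε0 : 0 < ε := by positivity
    have H := hasDerivAt_integral_of_dominated_loc_of_deriv_le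
      (μ := volume.restrict (Ioi 0))
      (F := fun (w' : ℂ) (x : ℝ) => Complex.exp (-w' * ((x ^ α : ℝ) : ℂ)))
      (F' := fun (w' : ℂ) (x : ℝ) =>
        -((x ^ α : ℝ) : ℂ) * Complex.exp (-w' * ((x ^ α : ℝ) : ℂ)))
      (x₀ := w) (bound := fun x => x ^ α * Real.exp (-ε * x ^ α)) (Metric.ball_mem_nhds w hε0)
      (Eventually.of_forall fun w' => meas_aux α w' _)
      (integrable_aux α hα1 hw')
      (by apply Measurable.aestronglyMeasurable; fun_prop)
      ?_ ?_ ?_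
    · exact H.2.differentiableAt
    · -- bound
      filter_upwards [ae_restrict_mem measurableSet_Ioi] with x hx
      intro w' hw'ball
      have hxpos : (0 : ℝ) < x := hx
      have hre : ε ≤ w'.re := by
        have h2 : ‖w' - w‖ < ε := by
          rw [← dist_eq_norm]
          exact Metric.mem_ball.mp hw'ball
        have h1 : |(w' - w).re| ≤ ‖w' - w‖ := Complex.abs_re_le_norm _
        have h3 := abs_le.mp (h1.trans h2.le)
        simp only [Complex.sub_re] at h3
        have h4 : -(ε) ≤ w'.re - w.re := h3.1
        rw [hε] at *
        linarith
      have hxα : (0 : ℝ) ≤ x ^ α := Real.rpow_nonneg hxpos.le α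
      rw [norm_mul, norm_neg, Complex.norm_real, norm_aux]
      rw [Real.norm_eq_abs, abs_of_nonneg hxα]
      exact mul_le_mul_of_nonneg_left
        (Real.exp_le_exp.mpr (by nlinarith)) hxα
    · exact integrableOn_rpow_mul_exp_neg_mul_rpow (by linarith) (by linarith) hε0
    · filter_upwards with x
      intro w' _
      have h1 : HasDerivAt (fun u : ℂ => -u * ((x ^ α : ℝ) : ℂ)) (-((x ^ α : ℝ) : ℂ)) w' := by
        simpa using ((hasDerivAt_id w').neg.mul_const (((x ^ α : ℝ) : ℂ)))
      simpa [mul_comm] using h1.cexp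
  have hga : AnalyticOnNhd ℂ g U := by
    refine DifferentiableOn.analyticOnNhd ?_ hUopen
    intro w hw
    refine DifferentiableAt.differentiableWithinAt ?_
    refine (differentiableAt_const _).mul ?_
    exact ((hasDerivAt_id w).cpow_const (Or.inl hw)).differentiableAt
  have heqreal : ∀ b : ℝ, 0 < b → f (b : ℂ) = g (b : ℂ) := by
    intro b hb
    have h1 : ∀ x : ℝ, Complex.exp (-(b : ℂ) * ((x ^ α : ℝ) : ℂ))
        = ((Real.exp (-b * x ^ α) : ℝ) : ℂ) := by
      intro x
      rw [Complex.ofReal_exp]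
      congr 1
      push_cast
      ring
    simp only [hf, hg]
    have h2 : (∫ x : ℝ in Ioi 0, Complex.exp (-(b : ℂ) * ((x ^ α : ℝ) : ℂ)))
        = (((∫ x : ℝ in Ioi 0, Real.exp (-b * x ^ α)) : ℝ) : ℂ) :=
      (setIntegral_congr_fun measurableSet_Ioi (fun x _ => h1 x)).trans integral_ofReal
    rw [h2, integral_exp_neg_mul_rpow hα0 hb]
    rw [show (-1 : ℝ) / α = -(1 / α) by ring]
    rw [Complex.ofReal_mul, ← Complex.ofReal_cpow hb.le]
    ring
  have hfreq : ∃ᶠ w in nhdsWithin (1 : ℂ) {(1 : ℂ)}ᶜ, f w = g w := by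
    have htend : Tendsto (fun n : ℕ => ((1 + (1 : ℝ) / (n + 1) : ℝ) : ℂ)) atTop
        (nhdsWithin (1 : ℂ) {(1 : ℂ)}ᶜ) := by
      rw [tendsto_nhdsWithin_iff]
      constructor
      · have h2 : Tendsto (fun n : ℕ => (1 + (1 : ℝ) / (n + 1))) atTop (nhds 1) := by
          simpa using (tendsto_const_nhds : Tendsto (fun _ : ℕ => (1 : ℝ)) atTop (nhds 1)).add tendsto_one_div_add_atTop_nhds_zero_nat
        have := (Complex.continuous_ofReal.tendsto (1 : ℝ)).comp h2
        simpa [Function.comp_def] using this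
      · filter_upwards with n
        simp only [mem_compl_iff, mem_singleton_iff]
        intro h
        have : (1 + (1 : ℝ) / (n + 1)) = 1 := by exact_mod_cast h
        have hn : (0 : ℝ) < 1 / (n + 1) := by positivity
        linarith
    exact htend.frequently (Frequently.of_forall fun n => heqreal _ (by positivity))
  have := hfa.eqOn_of_preconnected_of_frequently_eq hga hUconn
    (show (1 : ℂ) ∈ U by simp [hUdef]) hfreq
  exact this hz

lemma cpow_polar {r φ : ℝ} (hr : 0 < r) (hφ₁ : -Real.pi < φ) (hφ₂ : φ ≤ Real.pi) (w : ℝ) :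
    ((r : ℂ) * ((Real.cos φ : ℝ) + (Real.sin φ : ℝ) * Complex.I)) ^ ((w : ℝ) : ℂ)
      = ((r ^ w : ℝ) : ℂ) * ((Real.cos (w * φ) : ℝ) + (Real.sin (w * φ) : ℝ) * Complex.I) := by
  have hcast : ((r : ℂ) * ((Real.cos φ : ℝ) + (Real.sin φ : ℝ) * Complex.I))
      = (r : ℂ) * (Complex.cos φ + Complex.sin φ * Complex.I) := by
    rw [Complex.ofReal_cos, Complex.ofReal_sin]
  rw [hcast]
  set z : ℂ := (r : ℂ) * (Complex.cos φ + Complex.sin φ * Complex.I) with hz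
  have habs : ‖z‖ = r := by
    rw [hz, norm_mul, Complex.norm_cos_add_sin_mul_I, Complex.norm_real, Real.norm_eq_abs, abs_of_pos hr, mul_one]
  have hzne : z ≠ 0 := by
    intro h
    rw [h, norm_zero] at habs
    exact hr.ne habs
  have harg : Complex.arg z = φ := Complex.arg_mul_cos_add_sin_mul_I hr ⟨hφ₁, hφ₂⟩
  have hlog : Complex.log z = (Real.log r : ℂ) + (φ : ℂ) * Complex.I := by
    apply Complex.ext
    · simp [Complex.log_re, habs]
    · simp [Complex.log_im, harg]
  rw [Complex.cpow_def_of_ne_zero hzne, hlog, add_mul, Complex.exp_add]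
  have h1 : Complex.exp ((Real.log r : ℂ) * (w : ℂ)) = ((r ^ w : ℝ) : ℂ) := by
    rw [← Complex.ofReal_mul, ← Complex.ofReal_exp]
    congr 1
    rw [Real.rpow_def_of_pos hr, mul_comm]
  have h2 : (φ : ℂ) * Complex.I * (w : ℂ) = ((w * φ : ℝ) : ℂ) * Complex.I := by
    push_cast; ring
  rw [h1, h2, Complex.exp_mul_I]
  rw [Complex.ofReal_cos, Complex.ofReal_sin]

lemma integrableOn_Iic_of_neg {f : ℝ → ℂ}
    (h : IntegrableOn (fun x => f (-x)) (Ici (0 : ℝ))) : IntegrableOn f (Iic (0 : ℝ)) := by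
  have hmap : volume.restrict (Iic (0 : ℝ))
      = Measure.map Neg.neg (volume.restrict (Ici (0 : ℝ))) := by
    have h1 : (Neg.neg ⁻¹' (Iic (0 : ℝ))) = Ici (0 : ℝ) := by ext x; simp
    rw [← h1, ← Measure.restrict_map measurable_neg measurableSet_Iic,
      Measure.map_neg_eq_self]
  have hemb : MeasurableEmbedding (Neg.neg : ℝ → ℝ) :=
    (MeasurableEquiv.neg ℝ).measurableEmbedding
  unfold IntegrableOn
  rw [hmap, hemb.integrable_map_iff]
  exact h

end StableCharAux

open StableCharAux Set in
/-- Lemma 4.4 of the paper: the integral over `ℝ` of the `α`-stable characteristic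
function, `1 < α < 2`, with `c_α = (Γ(2-α)/(1-α)) cos(πα/2) > 0`. -/
theorem stable_char_function_integral (α : ℝ) (hα1 : 1 < α) (hα2 : α < 2)
    (hc : 0 < Real.Gamma (2 - α) / (1 - α) * Real.cos (Real.pi * α / 2)) :
    (∫ lam : ℝ, Complex.exp
        (-(((Real.Gamma (2 - α) / (1 - α) * Real.cos (Real.pi * α / 2) : ℝ) : ℂ)) *
          ((|lam| ^ α : ℝ) : ℂ) *
          (1 + Complex.I * Real.sign lam * Real.tan (Real.pi * α / 2)))) =
      ((2 * Real.Gamma (1 + 1 / α) * ((α - 1) / Real.Gamma (2 - α)) ^ (1 / α) *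
          Real.sin (Real.pi / α) : ℝ) : ℂ) := by
  have hπ := Real.pi_pos
  set θ := Real.pi * α / 2 with hθdef
  set c := Real.Gamma (2 - α) / (1 - α) * Real.cos θ with hcdef
  set t := Real.tan θ with htdef
  have hθ1 : Real.pi / 2 < θ := by rw [hθdef]; nlinarith
  have hθ2 : θ < Real.pi := by rw [hθdef]; nlinarith
  have hcosθ : Real.cos θ < 0 :=
    Real.cos_neg_of_pi_div_two_lt_of_lt hθ1 (by linarith)
  have hsinθ : 0 < Real.sin θ := Real.sin_pos_of_pos_of_lt_pi (by linarith) hθ2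
  have hG : 0 < Real.Gamma (2 - α) := Real.Gamma_pos_of_pos (by linarith)
  set r := Real.Gamma (2 - α) / (α - 1) with hrdef
  have hr : 0 < r := by apply div_pos hG; linarith
  set φ := θ - Real.pi with hφdef
  have hφ1 : -Real.pi < φ := by rw [hφdef]; linarith
  have hφ2 : φ ≤ Real.pi := by rw [hφdef]; linarith
  have hφneg : φ < 0 := by rw [hφdef]; linarith
  -- trig values of φ
  have hcosφ : Real.cos φ = -Real.cos θ := by
    rw [hφdef, Real.cos_sub]; simp
  have hsinφ : Real.sin φ = -Real.sin θ := by
    rw [hφdef, Real.sin_sub]; simp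
  -- the two half-line coefficients
  set z₁ : ℂ := (c : ℂ) * (1 + Complex.I * t) with hz₁def
  set z₂ : ℂ := (c : ℂ) * (1 - Complex.I * t) with hz₂def
  have hct : c * t = Real.Gamma (2 - α) / (1 - α) * Real.sin θ := by
    rw [hcdef, htdef, Real.tan_eq_sin_div_cos, mul_assoc,
      mul_comm (Real.cos θ), div_mul_cancel₀ _ (ne_of_lt hcosθ)]
  have hcr : c = r * (-Real.cos θ) := by
    rw [hcdef, hrdef]
    have h1α : (1 : ℝ) - α ≠ 0 := by intro h; linarith
    have h2α : α - 1 ≠ 0 := by intro h; linarith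
    field_simp
    ring
  have hctr : c * t = r * (-Real.sin θ) := by
    rw [hct, hrdef]
    have h1α : (1 : ℝ) - α ≠ 0 := by intro h; linarith
    have h2α : α - 1 ≠ 0 := by intro h; linarith
    field_simp
    ring
  have hz₁ : z₁ = (r : ℂ) * ((Real.cos φ : ℝ) + (Real.sin φ : ℝ) * Complex.I) := by
    rw [hz₁def, hcosφ, hsinφ]
    have : (c : ℂ) * (1 + Complex.I * t) = (c : ℂ) + ((c * t : ℝ) : ℂ) * Complex.I := by
      push_cast; ring
    rw [this, hctr, hcr]
    push_cast
    ring
  have hz₂ : z₂ = (r : ℂ) * ((Real.cos (-φ) : ℝ) + (Real.sin (-φ) : ℝ) * Complex.I) := by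
    rw [hz₂def, Real.cos_neg, Real.sin_neg, hcosφ, hsinφ]
    have : (c : ℂ) * (1 - Complex.I * t) = (c : ℂ) - ((c * t : ℝ) : ℂ) * Complex.I := by
      push_cast; ring
    rw [this, hctr, hcr]
    push_cast
    ring
  have hz₁re : 0 < z₁.re := by
    have : z₁.re = c := by
      rw [hz₁def]
      simp [Complex.mul_re, Complex.add_re, Complex.mul_im, Complex.I_re, Complex.I_im]
    rw [this]; exact hc
  have hz₂re : 0 < z₂.re := by
    have : z₂.re = c := by
      rw [hz₂def]
      simp [Complex.mul_re, Complex.sub_re, Complex.mul_im, Complex.I_re, Complex.I_im]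
    rw [this]; exact hc
  -- the integrand
  set f : ℝ → ℂ := fun lam => Complex.exp
      (-((c : ℝ) : ℂ) * ((|lam| ^ α : ℝ) : ℂ)
        * (1 + Complex.I * Real.sign lam * (t : ℝ))) with hfdef
  have hfpos : ∀ x ∈ Ioi (0 : ℝ), f x = Complex.exp (-z₁ * ((x ^ α : ℝ) : ℂ)) := by
    intro x hx
    have hx' : (0 : ℝ) < x := hx
    rw [hfdef]
    simp only
    rw [Real.sign_of_pos hx', abs_of_pos hx']
    congr 1
    rw [hz₁def]
    push_cast
    ring
  have hfneg : ∀ x ∈ Ioi (0 : ℝ), f (-x) = Complex.exp (-z₂ * ((x ^ α : ℝ) : ℂ)) := by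
    intro x hx
    have hx' : (0 : ℝ) < x := hx
    rw [hfdef]
    simp only
    rw [Real.sign_of_neg (by linarith), abs_neg, abs_of_pos hx']
    congr 1
    rw [hz₂def]
    push_cast
    ring
  have hIoi : IntegrableOn f (Ioi (0 : ℝ)) :=
    (integrable_aux α hα1 hz₁re).congr_fun (fun x hx => (hfpos x hx).symm) measurableSet_Ioi
  have hIoi' : IntegrableOn (fun x => f (-x)) (Ioi (0 : ℝ)) :=
    (integrable_aux α hα1 hz₂re).congr_fun (fun x hx => (hfneg x hx).symm) measurableSet_Ioi
  have hIic : IntegrableOn f (Iic (0 : ℝ)) := by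
    apply integrableOn_Iic_of_neg
    rwa [integrableOn_Ici_iff_integrableOn_Ioi]
  have hInt : Integrable f := by
    rw [← integrableOn_univ, ← Iic_union_Ioi (a := (0 : ℝ))]
    exact hIic.union hIoi
  have hsplit : (∫ x, f x) = (∫ x in Ioi (0 : ℝ), f x) + ∫ x in Iic (0 : ℝ), f x := by
    rw [← integral_add_compl measurableSet_Ioi hInt, compl_Ioi]
  have hIicInt : (∫ x in Iic (0 : ℝ), f x) = ∫ x in Ioi (0 : ℝ), f (-x) := by
    rw [integral_comp_neg_Ioi, neg_zero]
  have hI₁ : (∫ x in Ioi (0 : ℝ), f x)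
      = ((Real.Gamma (1 / α + 1) : ℝ) : ℂ) * z₁ ^ ((-(1 / α) : ℝ) : ℂ) := by
    rw [setIntegral_congr_fun measurableSet_Ioi hfpos]
    exact key α hα1 hz₁re
  have hI₂ : (∫ x in Ioi (0 : ℝ), f (-x))
      = ((Real.Gamma (1 / α + 1) : ℝ) : ℂ) * z₂ ^ ((-(1 / α) : ℝ) : ℂ) := by
    rw [setIntegral_congr_fun measurableSet_Ioi hfneg]
    exact key α hα1 hz₂re
  -- compute the powers
  have hp₁ : z₁ ^ ((-(1 / α) : ℝ) : ℂ)
      = ((r ^ (-(1 / α)) : ℝ) : ℂ) * ((Real.cos (-(1 / α) * φ) : ℝ)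
          + (Real.sin (-(1 / α) * φ) : ℝ) * Complex.I) := by
    rw [hz₁]
    exact cpow_polar hr hφ1 hφ2 (-(1 / α))
  have hp₂ : z₂ ^ ((-(1 / α) : ℝ) : ℂ)
      = ((r ^ (-(1 / α)) : ℝ) : ℂ) * ((Real.cos (-(1 / α) * φ) : ℝ)
          - (Real.sin (-(1 / α) * φ) : ℝ) * Complex.I) := by
    rw [hz₂]
    have := cpow_polar hr (by linarith : -Real.pi < -φ) (by linarith : -φ ≤ Real.pi) (-(1 / α))
    rw [this]
    have h1 : -(1 / α) * -φ = -(-(1 / α) * φ) := by ring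
    rw [h1, Real.cos_neg, Real.sin_neg]
    push_cast
    ring
  have hsum : z₁ ^ ((-(1 / α) : ℝ) : ℂ) + z₂ ^ ((-(1 / α) : ℝ) : ℂ)
      = ((r ^ (-(1 / α)) * (2 * Real.cos (-(1 / α) * φ)) : ℝ) : ℂ) := by
    rw [hp₁, hp₂]
    push_cast
    ring
  -- real identities
  have hα0 : α ≠ 0 := by linarith
  have hcosval : Real.cos (-(1 / α) * φ) = Real.sin (Real.pi / α) := by
    have e1 : (1 / α) * (Real.pi * α / 2) = Real.pi / 2 := by
      rw [mul_comm Real.pi α, mul_div_assoc, ← mul_assoc, one_div, inv_mul_cancel₀ hα0, one_mul]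
    have e2 : (1 / α) * Real.pi = Real.pi / α := by rw [one_div, inv_mul_eq_div]
    have e3 : -(1 / α) * φ = -(Real.pi / 2 - Real.pi / α) := by
      calc -(1 / α) * φ = -((1 / α) * (Real.pi * α / 2) - (1 / α) * Real.pi) := by
            rw [hφdef, hθdef]; ring
        _ = -(Real.pi / 2 - Real.pi / α) := by rw [e1, e2]
    rw [e3, Real.cos_neg, Real.cos_pi_div_two_sub]
  have hrval : r ^ (-(1 / α)) = ((α - 1) / Real.Gamma (2 - α)) ^ (1 / α) := by
    rw [Real.rpow_neg hr.le, ← Real.inv_rpow hr.le, hrdef]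
    congr 1
    rw [inv_div]
  -- put it together
  calc (∫ lam : ℝ, f lam)
      = ((Real.Gamma (1 / α + 1) : ℝ) : ℂ)
          * (z₁ ^ ((-(1 / α) : ℝ) : ℂ) + z₂ ^ ((-(1 / α) : ℝ) : ℂ)) := by
        rw [hsplit, hIicInt, hI₁, hI₂]; ring
    _ = ((Real.Gamma (1 / α + 1)
          * (r ^ (-(1 / α)) * (2 * Real.cos (-(1 / α) * φ))) : ℝ) : ℂ) := by
        rw [hsum]; push_cast; ring
    _ = ((2 * Real.Gamma (1 + 1 / α) * ((α - 1) / Real.Gamma (2 - α)) ^ (1 / α) *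
          Real.sin (Real.pi / α) : ℝ) : ℂ) := by
        rw [hcosval, hrval, add_comm (1 / α) 1]
        push_cast
        ring
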